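/- arXiv:2410.01743 — 2 statements merged into one kernel-verified Lean document; each statement's English description precedes it below -/
import Mathlib

section
/- Let M be a positroid on [n] and suppose M = M_1 ⊕ ⋯ ⊕ M_m is a direct sum of matroids M_1, …, M_m on pairwise disjoint nonempty ground sets S_1, …, S_m with S_1 ∪ ⋯ ∪ S_m = [n]; that is, the bases of M are exactly the sets B_1 ∪ ⋯ ∪ B_m where each B_i is a basis of M_i. Then each M_i is a positroid on its ground set S_i with the linear order induced from [n]: writing S_i = {s_1 < s_2 < ⋯ < s_{m_i}} and r_i for the rank of M_i, there exists a real r_i × m_i matrix of rank r_i all of whose r_i × r_i minors are nonnegative, such that a set {s_{j_1}, …, s_{j_{r_i}}} is a basis of M_i if and only if the r_i × r_i minor on columns {j_1, …, j_{r_i}} is nonzero. -/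
namespace PositroidPaper

variable {n : ℕ}

/-- The last element `n` of `[n] = {1,…,n}`, realized as the last element of `Fin n`. -/
def lastF (n : ℕ) [NeZero n] : Fin n :=
  ⟨n - 1, by have := Nat.pos_of_ne_zero (NeZero.ne n); omega⟩

/-- The Gale order `S ≤ᵢ T` with respect to the `i`-order on `Fin n`
(the `i`-order is transported to the natural order on `Fin n` by `a ↦ a - i`). -/
def galeLE (i : Fin n) (S T : Finset (Fin n)) : Prop :=
  List.Forall₂ (· ≤ ·) ((S.image (fun a => a - i)).sort (· ≤ ·))
    ((T.image (fun a => a - i)).sort (· ≤ ·))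

/-- A Grassmann necklace of type `(k,n)`. -/
def IsGrassmannNecklace (n k : ℕ) [NeZero n] (J : Fin n → Finset (Fin n)) : Prop :=
  (∀ i, (J i).card = k) ∧
    ∀ i : Fin n,
      (i ∈ J i → ∃ j : Fin n, J (i + 1) = insert j ((J i).erase i)) ∧
      (i ∉ J i → J (i + 1) = J i)

/-- `B(J)`: the `k`-subsets `B` of `[n]` with `J_i ≤ᵢ B` for all `i`. -/
noncomputable def necklaceBases (n k : ℕ) (J : Fin n → Finset (Fin n)) :
    Finset (Finset (Fin n)) := by
  classical
  exact (Finset.powersetCard k (Finset.univ : Finset (Fin n))).filter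
    (fun B => ∀ i, galeLE i (J i) B)

/-- The maximal minor of a `k × n` matrix on the column set `I` (taken in increasing order);
junk value `0` if `I` does not have exactly `k` elements. -/
noncomputable def colMinor {k n : ℕ} (A : Matrix (Fin k) (Fin n) ℝ) (I : Finset (Fin n)) : ℝ :=
  if h : I.card = k then (A.submatrix id (fun j => ((I.orderIsoOfFin h) j : Fin n))).det else 0

/-- `Bs` is the set of bases of a rank-`k` positroid on `[n]`. -/
def IsPositroidBases (n k : ℕ) (Bs : Finset (Finset (Fin n))) : Prop :=
  ∃ A : Matrix (Fin k) (Fin n) ℝ, A.rank = k ∧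
    (∀ I : Finset (Fin n), 0 ≤ colMinor A I) ∧
    ∀ I : Finset (Fin n), I ∈ Bs ↔ I.card = k ∧ colMinor A I ≠ 0

/-- The 0/1 indicator vector `e_B ∈ ℝ^n` of `B ⊆ [n]`. -/
def indic (B : Finset (Fin n)) : Fin n → ℝ := fun a => if a ∈ B then 1 else 0

/-- The positroid polytope `P_J = conv{e_B : B ∈ B(J)}`. -/
def PJ (n k : ℕ) (J : Fin n → Finset (Fin n)) : Set (Fin n → ℝ) :=
  convexHull ℝ {x | ∃ B ∈ necklaceBases n k J, x = indic B}

/-- The `j`-th element (0-indexed) of `S` in the `i`-order. -/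
noncomputable def nthGale [NeZero n] (i : Fin n) (S : Finset (Fin n)) (j : ℕ) : Fin n :=
  ((S.image (fun a => a - i)).sort (· ≤ ·)).getD j 0 + i

/-- The (closed) cyclic interval `[i,j] ⊆ [n]`. -/
def cycInterval (i j : Fin n) : Finset (Fin n) :=
  Finset.univ.filter (fun a => a - i ≤ j - i)

/-- `x_{[i,j]} = x_i + x_{i+1} + ⋯ + x_{j-1}` (cyclically; the empty sum if `i = j`). -/
def cycSum (x : Fin n → ℝ) (i j : Fin n) : ℝ :=
  ∑ a ∈ Finset.univ.filter (fun a : Fin n => a - i < j - i), x a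

/-- The set of cyclic left descents of the word `w|_S`, where `S ⊆ [n]` is totally ordered
by the `i`-order: an element `a ∈ S` belongs to this set iff either `a` has a successor `b`
in `S` (w.r.t. the `i`-order) occurring to its left in `w`, or `a` is the maximum of `S`,
`S` has at least two elements, and the minimum of `S` occurs to the left of `a` in `w`. -/
noncomputable def cDesL (w : Equiv.Perm (Fin n)) (i : Fin n) (S : Finset (Fin n)) :
    Finset (Fin n) := by
  classical
  exact S.filter (fun a =>
    (∃ b ∈ S, a - i < b - i ∧ (∀ c ∈ S, a - i < c - i → b - i ≤ c - i) ∧ w⁻¹ b < w⁻¹ a) ∨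
    ((∀ b ∈ S, b - i ≤ a - i) ∧ ∃ m ∈ S, m ≠ a ∧ (∀ b ∈ S, m - i ≤ b - i) ∧ w⁻¹ m < w⁻¹ a))

/-- `cdes_L(w|_S)` where `S` is ordered by the `i`-order. -/
noncomputable def cdesL (w : Equiv.Perm (Fin n)) (i : Fin n) (S : Finset (Fin n)) : ℕ :=
  (cDesL w i S).card

/-- The cyclic rotation `w^{(r)}` of the word `w_1 ⋯ w_n` ending at the letter `r`. -/
def rotTo [NeZero n] (w : Equiv.Perm (Fin n)) (r : Fin n) : Equiv.Perm (Fin n) :=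
  (Equiv.addRight (w⁻¹ r + 1)).trans w

/-- `I_r(w) = cDes_L(w^{(r)})`. -/
noncomputable def IrFinset [NeZero n] (w : Equiv.Perm (Fin n)) (r : Fin n) : Finset (Fin n) :=
  cDesL (rotTo w r) 0 Finset.univ

/-- The vertex set `{e_{I_r(w)} : r ∈ [n]}` of the `(w)`-simplex. -/
def vertexSet [NeZero n] (w : Equiv.Perm (Fin n)) : Set (Fin n → ℝ) :=
  {x | ∃ r : Fin n, x = indic (IrFinset w r)}

/-- The `(w)`-simplex `Δ_(w) = conv{e_{I_1(w)},…,e_{I_n(w)}}`. -/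
def simplexW [NeZero n] (w : Equiv.Perm (Fin n)) : Set (Fin n → ℝ) :=
  convexHull ℝ (vertexSet w)

/-- The set `D_J` of permutations labelling the circuit triangulation of `P_J`. -/
noncomputable def DJ (n k : ℕ) [NeZero n] (J : Fin n → Finset (Fin n)) :
    Finset (Equiv.Perm (Fin n)) := by
  classical
  exact Finset.univ.filter (fun w =>
    w (lastF n) = lastF n ∧ cdesL w 0 Finset.univ = k ∧
      ∀ r j : Fin n, galeLE j (J j) (IrFinset w r))

/-- Connectedness of a matroid on `[n]` given by its set of bases: the ground set admits no
partition into nonempty `A`, `Aᶜ` such that every basis is a union of a basis of the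
restriction to `A` and one of the restriction to `Aᶜ`, all such unions being bases. -/
def ConnectedBases (Bs : Finset (Finset (Fin n))) : Prop :=
  ¬ ∃ A : Finset (Fin n), A.Nonempty ∧ Aᶜ.Nonempty ∧
      ∀ B₁ ∈ Bs, ∀ B₂ ∈ Bs, (B₁ ∩ A) ∪ (B₂ \ A) ∈ Bs

/-- `Δ_(u)` and `Δ_(w)` share a common facet. -/
def SharedFacet [NeZero n] (u w : Equiv.Perm (Fin n)) : Prop :=
  (vertexSet u ∩ vertexSet w).ncard = n - 1 ∧
    simplexW u ∩ simplexW w = convexHull ℝ (vertexSet u ∩ vertexSet w)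

/-- The graph `Γ_J` of the circuit triangulation of `P_J`. -/
def gammaJ (n k : ℕ) [NeZero n] (J : Fin n → Finset (Fin n)) :
    SimpleGraph (Equiv.Perm (Fin n)) where
  Adj u w := u ≠ w ∧ u ∈ DJ n k J ∧ w ∈ DJ n k J ∧ SharedFacet u w
  symm := by
    constructor
    rintro u w ⟨hne, hu, hw, hc, hi⟩
    refine ⟨hne.symm, hw, hu, ?_, ?_⟩
    · rwa [Set.inter_comm]
    · rw [Set.inter_comm (simplexW w) (simplexW u), Set.inter_comm (vertexSet w) (vertexSet u)]
      exact hi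
  loopless := ⟨fun u h => h.1 rfl⟩

/-- Graph distance in `Γ_J`. -/
noncomputable def distJ (n k : ℕ) [NeZero n] (J : Fin n → Finset (Fin n))
    (u w : Equiv.Perm (Fin n)) : ℕ :=
  (gammaJ n k J).dist u w

/-- The partial order `≺` on `D_J` determined by `w₀`. -/
def precJ (n k : ℕ) [NeZero n] (J : Fin n → Finset (Fin n))
    (w0 u v : Equiv.Perm (Fin n)) : Prop :=
  u ≠ v ∧ distJ n k J w0 u + distJ n k J u v = distJ n k J w0 v

/-- `cover(w)`: the number of elements of `D_J` covered by `w` in `(D_J, ≺)`. -/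
noncomputable def coverNum (n k : ℕ) [NeZero n] (J : Fin n → Finset (Fin n))
    (w0 w : Equiv.Perm (Fin n)) : ℕ :=
  {u : Equiv.Perm (Fin n) | u ∈ DJ n k J ∧ precJ n k J w0 u w ∧
    ¬ ∃ v ∈ DJ n k J, precJ n k J w0 u v ∧ precJ n k J w0 v w}.ncard

/-- The facet of `Δ_(w)` obtained by deleting the vertex `e_{I_r(w)}`. -/
def facetW [NeZero n] (w : Equiv.Perm (Fin n)) (r : Fin n) : Set (Fin n → ℝ) :=
  convexHull ℝ {x | ∃ r' : Fin n, r' ≠ r ∧ x = indic (IrFinset w r')}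

/-- The Ehrhart counting function `L(X,t) = #(t·X ∩ ℤ^m)`. -/
noncomputable def Lcount {m : ℕ} (X : Set (Fin m → ℝ)) (t : ℕ) : ℕ :=
  ((fun x : Fin m → ℝ => (t : ℝ) • x) '' X ∩ {x | ∀ a, ∃ z : ℤ, x a = (z : ℝ)}).ncard

/-- Projection `ℝ^n → ℝ^{n-1}` onto the first `n-1` coordinates. -/
def proj (n : ℕ) (x : Fin n → ℝ) : Fin (n - 1) → ℝ :=
  fun a => x (Fin.castLE (Nat.sub_le n 1) a)

/-- `F` is an upper facet of `Q ⊆ ℝ^m`. -/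
def IsUpperFacet {m : ℕ} (Q F : Set (Fin m → ℝ)) : Prop :=
  ∃ a b : Fin m, a ≤ b ∧ ∃ c : ℤ,
    F = Q ∩ {x | ∑ t ∈ Finset.Icc a b, x t = (c : ℝ)} ∧
    Q ⊆ {x | ∑ t ∈ Finset.Icc a b, x t ≤ (c : ℝ)} ∧
    Module.finrank ℝ (affineSpan ℝ F).direction = m - 1

/-- The half-open polytope: `Q` with all its upper facets removed. -/
def halfOpen {m : ℕ} (Q : Set (Fin m → ℝ)) : Set (Fin m → ℝ) :=
  Q \ ⋃₀ {F | IsUpperFacet Q F}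

/-- The half-open simplex `∇°_w`. -/
def nablaO [NeZero n] (w : Equiv.Perm (Fin n)) : Set (Fin n → ℝ) :=
  {y | 0 < y (w 0) ∧ y (w (lastF n)) ≤ 1 ∧
    ∀ p : Fin n, p ≠ lastF n →
      (w p < w (p + 1) → y (w p) ≤ y (w (p + 1))) ∧
      (w (p + 1) < w p → y (w p) < y (w (p + 1)))}

/-- `des(w) = #{i ∈ [n-1] : w_i > w_{i+1}}`. -/
noncomputable def desNum [NeZero n] (w : Equiv.Perm (Fin n)) : ℕ := by
  classical
  exact (Finset.univ.filter (fun p : Fin n => p ≠ lastF n ∧ w (p + 1) < w p)).card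

/-- `F` is a facet of the polytope `P ⊆ ℝ^n`. -/
def IsFacetOf {n : ℕ} (P F : Set (Fin n → ℝ)) : Prop :=
  ∃ (u : Fin n → ℝ) (c : ℝ),
    F = P ∩ {x | ∑ a, u a * x a = c} ∧ P ⊆ {x | ∑ a, u a * x a ≤ c} ∧
    Module.finrank ℝ (affineSpan ℝ F).direction + 1 =
      Module.finrank ℝ (affineSpan ℝ P).direction

section AuxProof
open Equiv Finset

theorem my_sign_eq_signAux {m : ℕ} (f : Perm (Fin m)) : Perm.sign f = Perm.signAux f := by
  refine Equiv.Perm.swap_induction_on f (by simp [Perm.signAux_one]) ?_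
  intro f x y hxy ih
  rw [Perm.sign_mul, Perm.signAux_mul, Perm.sign_swap hxy, Perm.signAux_swap hxy, ih]

theorem sign_merge_blocks {R C : ℕ} {β : Type*} [LinearOrder β]
    (g1 : Fin R → β) (g2 : Fin C → β) (h1 : StrictMono g1) (h2 : StrictMono g2)
    (θ : Perm (Fin (R + C)))
    (hθ : ∀ x y, θ x ≤ θ y ↔
      Sum.elim g1 g2 (finSumFinEquiv.symm x) ≤ Sum.elim g1 g2 (finSumFinEquiv.symm y)) :
    Perm.sign θ = ∏ p : Fin R, ∏ q : Fin C, (if g2 q ≤ g1 p then (-1 : ℤˣ) else 1) := by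
  classical
  set gg : Fin (R + C) → β := fun x => Sum.elim g1 g2 (finSumFinEquiv.symm x) with hgg
  have e1 : Perm.sign θ
      = ∏ a : Fin (R + C), ∏ b : Fin (R + C),
          (if b < a then (if gg a ≤ gg b then (-1 : ℤˣ) else 1) else 1) := by
    rw [my_sign_eq_signAux]
    unfold Perm.signAux Equiv.Perm.finPairsLT
    rw [Finset.prod_sigma]
    refine Finset.prod_congr rfl fun a _ => ?_
    have hset : ((Finset.range (a : ℕ)).attachFin
        (fun m hm => (Finset.mem_range.1 hm).trans a.2)) =
        Finset.univ.filter (fun b => b < a) := by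
      ext b
      rw [Finset.mem_attachFin, Finset.mem_range, Finset.mem_filter]
      exact ⟨fun h => ⟨Finset.mem_univ _, h⟩, fun h => h.2⟩
    rw [hset, Finset.prod_filter]
    refine Finset.prod_congr rfl fun b _ => ?_
    by_cases hba : b < a
    · simp only [hba, if_true]
      by_cases h : θ a ≤ θ b
      · rw [if_pos h, if_pos ((hθ a b).1 h)]
      · rw [if_neg h, if_neg (fun hc => h ((hθ a b).2 hc))]
    · rw [if_neg hba, if_neg hba]
  rw [e1]
  rw [← Equiv.prod_comp finSumFinEquiv (fun a => ∏ b : Fin (R + C),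
      (if b < a then (if gg a ≤ gg b then (-1 : ℤˣ) else 1) else 1))]
  have inner : ∀ a : Fin (R + C), (∏ b : Fin (R + C),
      (if b < a then (if gg a ≤ gg b then (-1 : ℤˣ) else 1) else 1))
      = ∏ v : Fin R ⊕ Fin C, (if finSumFinEquiv v < a then
          (if gg a ≤ gg (finSumFinEquiv v) then (-1 : ℤˣ) else 1) else 1) := by
    intro a
    rw [← Equiv.prod_comp finSumFinEquiv (fun b =>
      (if b < a then (if gg a ≤ gg b then (-1 : ℤˣ) else 1) else 1))]
  simp only [inner]
  rw [Fintype.prod_sum_type]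
  have hgl : ∀ p : Fin R, gg (finSumFinEquiv (Sum.inl p)) = g1 p := by
    intro p; simp [hgg]
  have hgr : ∀ q : Fin C, gg (finSumFinEquiv (Sum.inr q)) = g2 q := by
    intro q; simp [hgg]
  have hfirst : ∀ p : Fin R, (∏ v : Fin R ⊕ Fin C,
      (if finSumFinEquiv v < finSumFinEquiv (Sum.inl p) then
        (if gg (finSumFinEquiv (Sum.inl p)) ≤ gg (finSumFinEquiv v) then (-1 : ℤˣ) else 1)
        else 1)) = 1 := by
    intro p
    refine Finset.prod_eq_one fun v _ => ?_
    rcases v with p' | q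
    · by_cases hlt : finSumFinEquiv (Sum.inl p' : Fin R ⊕ Fin C) < finSumFinEquiv (Sum.inl p : Fin R ⊕ Fin C)
      · have hp' : p' < p := by
          rw [Fin.lt_def] at hlt ⊢
          simpa using hlt
        rw [if_pos hlt, hgl, hgl, if_neg (not_le.2 (h1 hp'))]
      · rw [if_neg hlt]
    · have : ¬ finSumFinEquiv (Sum.inr q : Fin R ⊕ Fin C) < finSumFinEquiv (Sum.inl p : Fin R ⊕ Fin C) := by
        simp only [finSumFinEquiv_apply_left, finSumFinEquiv_apply_right, Fin.lt_def,
          Fin.coe_castAdd, Fin.coe_natAdd, not_lt]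
        omega
      rw [if_neg this]
  simp only [hfirst, Finset.prod_const_one, one_mul]
  have hsecond : ∀ q : Fin C, (∏ v : Fin R ⊕ Fin C,
      (if finSumFinEquiv v < finSumFinEquiv (Sum.inr q) then
        (if gg (finSumFinEquiv (Sum.inr q)) ≤ gg (finSumFinEquiv v) then (-1 : ℤˣ) else 1)
        else 1)) = ∏ p : Fin R, (if g2 q ≤ g1 p then (-1 : ℤˣ) else 1) := by
    intro q
    rw [Fintype.prod_sum_type]
    have hA : ∀ p : Fin R, (if finSumFinEquiv (Sum.inl p) < finSumFinEquiv (Sum.inr q) then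
        (if gg (finSumFinEquiv (Sum.inr q)) ≤ gg (finSumFinEquiv (Sum.inl p)) then (-1 : ℤˣ)
          else 1) else 1) = (if g2 q ≤ g1 p then (-1 : ℤˣ) else 1) := by
      intro p
      have hlt : finSumFinEquiv (Sum.inl p : Fin R ⊕ Fin C) < finSumFinEquiv (Sum.inr q : Fin R ⊕ Fin C) := by
        simp only [finSumFinEquiv_apply_left, finSumFinEquiv_apply_right, Fin.lt_def,
          Fin.coe_castAdd, Fin.coe_natAdd]
        omega
      rw [if_pos hlt, hgl, hgr]
    have hB : ∀ q' : Fin C, (if finSumFinEquiv (Sum.inr q' : Fin R ⊕ Fin C) < finSumFinEquiv (Sum.inr q : Fin R ⊕ Fin C) then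
        (if gg (finSumFinEquiv (Sum.inr q)) ≤ gg (finSumFinEquiv (Sum.inr q')) then (-1 : ℤˣ)
          else 1) else 1) = 1 := by
      intro q'
      by_cases hlt : finSumFinEquiv (Sum.inr q' : Fin R ⊕ Fin C) < finSumFinEquiv (Sum.inr q : Fin R ⊕ Fin C)
      · have hq' : q' < q := by
          rw [Fin.lt_def] at hlt ⊢
          simpa using hlt
        rw [if_pos hlt, hgr, hgr, if_neg (not_le.2 (h2 hq'))]
      · rw [if_neg hlt]
    simp only [hA, hB, Finset.prod_const_one, mul_one]
  simp only [hsecond]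
  exact Finset.prod_comm

theorem connected_summands_of_positroid_are_positroids
    (n m k : ℕ) (S : Fin m → Finset (Fin n))
    (hSne : ∀ i, (S i).Nonempty)
    (hdisj : ∀ i j, i ≠ j → Disjoint (S i) (S j))
    (hcover : ∀ a : Fin n, ∃ i, a ∈ S i)
    (Bs : Fin m → Finset (Finset (Fin n))) (r : Fin m → ℕ)
    (hBsub : ∀ i, ∀ B ∈ Bs i, B ⊆ S i)
    (hBcard : ∀ i, ∀ B ∈ Bs i, B.card = r i)
    (hBne : ∀ i, (Bs i).Nonempty)
    (hexch : ∀ i, ∀ B₁ ∈ Bs i, ∀ B₂ ∈ Bs i, ∀ a ∈ B₁,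
      ∃ b ∈ B₂, insert b (B₁.erase a) ∈ Bs i)
    (M : Finset (Finset (Fin n)))
    (hM : ∀ B : Finset (Fin n),
      B ∈ M ↔ ∃ f : Fin m → Finset (Fin n), (∀ i, f i ∈ Bs i) ∧ B = Finset.univ.biUnion f)
    (hMpos : IsPositroidBases n k M) :
    ∀ i : Fin m, ∃ A : Matrix (Fin (r i)) (Fin (S i).card) ℝ,
      A.rank = r i ∧ (∀ I : Finset (Fin (S i).card), 0 ≤ colMinor A I) ∧
      ∀ B : Finset (Fin (S i).card), B.card = r i →
        (B.image (fun j => (((S i).orderIsoOfFin rfl) j : Fin n)) ∈ Bs i ↔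
          colMinor A B ≠ 0) := by
  classical
  obtain ⟨Amat, hArank, hApos, hAbasis⟩ := hMpos
  intro i
  -- chosen bases of each summand
  have hBcmem : ∀ j, (hBne j).choose ∈ Bs j := fun j => (hBne j).choose_spec
  set Bc : Fin m → Finset (Fin n) := fun j => (hBne j).choose with hBcdef
  set B₀ : Finset (Fin n) := Bc i with hB₀def
  have hB₀mem : B₀ ∈ Bs i := hBcmem i
  set Cs : Finset (Fin n) := Finset.univ.biUnion (fun j => if j = i then ∅ else Bc j) with hCsdef
  have hCsmem : ∀ a ∈ Cs, ∃ j, j ≠ i ∧ a ∈ Bc j := by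
    intro a ha
    rw [hCsdef, Finset.mem_biUnion] at ha
    obtain ⟨j, _, hj⟩ := ha
    by_cases hji : j = i
    · rw [if_pos hji] at hj; exact absurd hj (Finset.notMem_empty a)
    · rw [if_neg hji] at hj; exact ⟨j, hji, hj⟩
  have hCsnotSi : ∀ a ∈ Cs, a ∉ S i := by
    intro a ha hai
    obtain ⟨j, hji, hj⟩ := hCsmem a ha
    have haj : a ∈ S j := hBsub j _ (hBcmem j) hj
    exact (Finset.disjoint_left.1 (hdisj j i hji)) haj hai
  have hdisjBC : ∀ B : Finset (Fin n), B ⊆ S i → Disjoint B Cs := by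
    intro B hB
    rw [Finset.disjoint_left]
    intro a haB haC
    exact hCsnotSi a haC (hB haB)
  -- bridge up
  have hup : ∀ B ∈ Bs i, B ∪ Cs ∈ M := by
    intro B hB
    rw [hM]
    refine ⟨fun j => if j = i then B else Bc j, fun j => ?_, ?_⟩
    · simp only
      by_cases hji : j = i
      · rw [if_pos hji, hji]; exact hB
      · rw [if_neg hji]; exact hBcmem j
    · ext a
      rw [Finset.mem_biUnion, Finset.mem_union]
      constructor
      · rintro (haB | haC)
        · exact ⟨i, Finset.mem_univ i, by rw [if_pos rfl]; exact haB⟩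
        · obtain ⟨j, hji, hj⟩ := hCsmem a haC
          exact ⟨j, Finset.mem_univ j, by rw [if_neg hji]; exact hj⟩
      · rintro ⟨j, -, hj⟩
        by_cases hji : j = i
        · rw [if_pos hji] at hj; exact Or.inl hj
        · rw [if_neg hji] at hj
          refine Or.inr ?_
          rw [hCsdef, Finset.mem_biUnion]
          exact ⟨j, Finset.mem_univ j, by rw [if_neg hji]; exact hj⟩
  -- bridge down
  have hdown : ∀ B : Finset (Fin n), B ⊆ S i → B ∪ Cs ∈ M → B ∈ Bs i := by
    intro B hBS hBM
    rw [hM] at hBM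
    obtain ⟨g, hg, hgeq⟩ := hBM
    have hBgi : B = g i := by
      ext a
      constructor
      · intro haB
        have : a ∈ Finset.univ.biUnion g := by
          rw [← hgeq]; exact Finset.mem_union_left _ haB
        rw [Finset.mem_biUnion] at this
        obtain ⟨j, -, hj⟩ := this
        by_cases hji : j = i
        · rwa [hji] at hj
        · exact absurd (hBS haB)
            (Finset.disjoint_left.1 (hdisj j i hji) (hBsub j _ (hg j) hj))
      · intro hagi
        have : a ∈ B ∪ Cs := by
          rw [hgeq, Finset.mem_biUnion]; exact ⟨i, Finset.mem_univ i, hagi⟩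
        rcases Finset.mem_union.1 this with h | h
        · exact h
        · exact absurd (hBsub i _ (hg i) hagi) (hCsnotSi a h)
    rw [hBgi]; exact hg i
  -- cardinalities
  have hTM : B₀ ∪ Cs ∈ M := hup B₀ hB₀mem
  have hTk : (B₀ ∪ Cs).card = k := ((hAbasis _).1 hTM).1
  have hB₀card : B₀.card = r i := hBcard i B₀ hB₀mem
  have hB₀S : B₀ ⊆ S i := hBsub i B₀ hB₀mem
  have hkC : r i + Cs.card = k := by
    rw [← hTk, Finset.card_union_of_disjoint (hdisjBC B₀ hB₀S), hB₀card]
  have hIcard : ∀ B : Finset (Fin n), B ⊆ S i → B.card = r i → (B ∪ Cs).card = k := by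
    intro B hBS hBc
    rw [Finset.card_union_of_disjoint (hdisjBC B hBS), hBc, hkC]
  -- key bridge
  have key : ∀ B : Finset (Fin n), B ⊆ S i → B.card = r i →
      (B ∈ Bs i ↔ colMinor Amat (B ∪ Cs) ≠ 0) := by
    intro B hBS hBc
    constructor
    · intro h
      exact ((hAbasis _).1 (hup B h)).2
    · intro h
      refine hdown B hBS ((hAbasis _).2 ⟨hIcard B hBS hBc, h⟩)
  rcases Nat.eq_zero_or_pos (r i) with hr0 | hrpos
  · -- rank-zero summand
    haveI : IsEmpty (Fin (r i)) := by rw [hr0]; infer_instance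
    refine ⟨0, ?_, ?_, ?_⟩
    · rw [Matrix.rank_zero, hr0]
    · intro I
      rw [colMinor]
      split
      · rw [Matrix.det_isEmpty]; norm_num
      · exact le_refl 0
    · intro B hB
      have hBempty : B = ∅ := by
        rw [← Finset.card_eq_zero, hB, hr0]
      have hB₀empty : B₀ = ∅ := by
        rw [← Finset.card_eq_zero, hB₀card, hr0]
      have h1 : colMinor (0 : Matrix (Fin (r i)) (Fin (S i).card) ℝ) B = 1 := by
        rw [colMinor, dif_pos hB, Matrix.det_isEmpty]
      constructor
      · intro _; rw [h1]; norm_num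
      · intro _
        rw [hBempty, Finset.image_empty, ← hB₀empty]
        exact hB₀mem
  -- main case : r i > 0
  set T : Finset (Fin n) := B₀ ∪ Cs with hTdef
  set embT : Fin k → Fin n := fun j => T.orderEmbOfFin hTk j with hembT
  set Q : Matrix (Fin k) (Fin k) ℝ := Amat.submatrix id embT with hQdef
  have hdetQ : Q.det = colMinor Amat T := by
    rw [colMinor, dif_pos hTk]
    congr 1
  have hdQne : Q.det ≠ 0 := by
    rw [hdetQ]; exact ((hAbasis _).1 hTM).2
  have hdQpos : 0 < Q.det := lt_of_le_of_ne (hdetQ ▸ hApos T) (Ne.symm hdQne)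
  have hQunit : IsUnit Q.det := isUnit_iff_ne_zero.2 hdQne
  set N : Matrix (Fin k) (Fin n) ℝ := Q⁻¹ * Amat with hNdef
  have hNsub : ∀ (g : Fin k → Fin n),
      N.submatrix id g = Q⁻¹ * (Amat.submatrix id g) := by
    intro g
    ext p q
    simp [Matrix.mul_apply, hNdef, Matrix.submatrix_apply]
  have hNT : N.submatrix id embT = 1 := by
    rw [hNsub]
    exact Matrix.nonsing_inv_mul Q hQunit
  have hNTentry : ∀ p q : Fin k, N p (embT q) = if p = q then 1 else 0 := by
    intro p q
    have := congrFun (congrFun hNT p) q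
    simpa [Matrix.submatrix_apply, Matrix.one_apply] using this
  have hembTinj : Function.Injective embT := (T.orderEmbOfFin hTk).injective
  have hNcol : ∀ (p : Fin k) (c : Fin n), c ∈ T →
      N p c = if embT p = c then 1 else 0 := by
    intro p c hc
    obtain ⟨q, hq⟩ : ∃ q, embT q = c := by
      refine ⟨(T.orderIsoOfFin hTk).symm ⟨c, hc⟩, ?_⟩
      show T.orderEmbOfFin hTk _ = c
      rw [← Finset.coe_orderIsoOfFin_apply]
      simp
    rw [← hq, hNTentry]
    by_cases h : p = q
    · rw [if_pos h, if_pos (by rw [h])]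
    · rw [if_neg h, if_neg (fun hc' => h (hembTinj hc'))]
  have hminorN : ∀ I : Finset (Fin n), I.card = k →
      colMinor N I = (Q.det)⁻¹ * colMinor Amat I := by
    intro I hI
    rw [colMinor, colMinor, dif_pos hI, dif_pos hI, hNsub, Matrix.det_mul,
      Matrix.det_nonsing_inv, Ring.inverse_eq_inv]
  have hembTsurj : ∀ c ∈ T, ∃ q, embT q = c := by
    intro c hc
    refine ⟨(T.orderIsoOfFin hTk).symm ⟨c, hc⟩, ?_⟩
    show T.orderEmbOfFin hTk _ = c
    rw [← Finset.coe_orderIsoOfFin_apply]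
    simp
  -- rows corresponding to B₀
  set Rset : Finset (Fin k) := Finset.univ.filter (fun p => embT p ∈ B₀) with hRsetdef
  have hRcard : Rset.card = r i := by
    rw [← hB₀card]
    apply Finset.card_bij (fun p _ => embT p)
    · intro p hp; exact (Finset.mem_filter.1 hp).2
    · intro p hp p' hp' h; exact hembTinj h
    · intro b hb
      obtain ⟨q, hq⟩ := hembTsurj b (Finset.mem_union_left _ hb)
      exact ⟨q, Finset.mem_filter.2 ⟨Finset.mem_univ _, hq ▸ hb⟩, hq⟩
  set ρ : Fin (r i) → Fin k := fun p => Rset.orderEmbOfFin hRcard p with hρdef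
  have hρB₀ : ∀ p, embT (ρ p) ∈ B₀ := fun p =>
    (Finset.mem_filter.1 (Finset.orderEmbOfFin_mem Rset hRcard p)).2
  set cC := Cs.card with hcCdef
  set eC : Fin cC → Fin n := fun q => Cs.orderEmbOfFin rfl q with heCdef
  have heCmem : ∀ q, eC q ∈ Cs := fun q => Finset.orderEmbOfFin_mem _ _ q
  have heCT : ∀ q, eC q ∈ T := fun q => Finset.mem_union_right _ (heCmem q)
  set rowf : Fin (r i) ⊕ Fin cC → Fin k :=
    Sum.elim ρ (fun q => (T.orderIsoOfFin hTk).symm ⟨eC q, heCT q⟩) with hrowfdef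
  have hrowfC : ∀ q, embT (rowf (Sum.inr q)) = eC q := by
    intro q
    have h0 : rowf (Sum.inr q) = (T.orderIsoOfFin hTk).symm ⟨eC q, heCT q⟩ := rfl
    rw [h0]
    show T.orderEmbOfFin hTk _ = _
    rw [← Finset.coe_orderIsoOfFin_apply]
    simp
  have hB₀Cdisj : Disjoint B₀ Cs := hdisjBC B₀ hB₀S
  have hrowfinj : Function.Injective rowf := by
    intro u v huv
    rcases u with p | q <;> rcases v with p' | q'
    · exact congrArg Sum.inl ((Rset.orderEmbOfFin hRcard).injective huv)
    · exfalso
      have h1 : embT (rowf (Sum.inl p)) ∈ B₀ := hρB₀ p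
      rw [huv, hrowfC] at h1
      exact Finset.disjoint_left.1 hB₀Cdisj h1 (heCmem q')
    · exfalso
      have h1 : embT (rowf (Sum.inl p')) ∈ B₀ := hρB₀ p'
      rw [← huv, hrowfC] at h1
      exact Finset.disjoint_left.1 hB₀Cdisj h1 (heCmem q)
    · refine congrArg Sum.inr ((Cs.orderEmbOfFin rfl).injective ?_)
      have h2 : embT (rowf (Sum.inr q)) = embT (rowf (Sum.inr q')) := by rw [huv]
      rw [hrowfC, hrowfC] at h2
      exact h2
  set rowE : (Fin (r i) ⊕ Fin cC) ≃ Fin k :=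
    Equiv.ofBijective rowf ((Fintype.bijective_iff_injective_and_card rowf).2
      ⟨hrowfinj, by simp [hkC]⟩) with hrowEdef
  set eqk : (Fin (r i) ⊕ Fin cC) ≃ Fin k := finSumFinEquiv.trans (finCongr hkC) with heqkdef
  set sρ : ℤˣ := Equiv.Perm.sign (eqk.trans rowE.symm) with hsρdef
  set ι : Fin (S i).card → Fin n := fun q => (((S i).orderIsoOfFin rfl) q : Fin n) with hιdef
  have hι2 : ι = fun q => (S i).orderEmbOfFin rfl q := rfl
  have hιinj : Function.Injective ι := ((S i).orderEmbOfFin rfl).injective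
  have hιmem : ∀ q, ι q ∈ S i := fun q => Finset.orderEmbOfFin_mem (S i) rfl q
  set sgn1 : Fin n → ℤˣ := fun b => ∏ q : Fin cC, (if eC q ≤ b then (-1 : ℤˣ) else 1)
    with hsgn1def
  set Afin : Matrix (Fin (r i)) (Fin (S i).card) ℝ := fun p q =>
    (if (p : ℕ) = 0 then ((sρ : ℤ) : ℝ) else 1) * (((sgn1 (ι q) : ℤ) : ℝ) * N (ρ p) (ι q))
    with hAfindef
  have hιsub : ∀ B : Finset (Fin (S i).card), (B.image ι) ⊆ S i := by
    intro B a ha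
    obtain ⟨j, -, rfl⟩ := Finset.mem_image.1 ha
    exact hιmem j
  have hιcard : ∀ B : Finset (Fin (S i).card), B.card = r i → (B.image ι).card = r i := by
    intro B hB
    rw [Finset.card_image_of_injective _ hιinj, hB]
  have mainMinor : ∀ B : Finset (Fin (S i).card), B.card = r i →
      colMinor Afin B = (Q.det)⁻¹ * colMinor Amat ((B.image ι) ∪ Cs) := by
    intro B hB
    have hιBsub : (B.image ι) ⊆ S i := hιsub B
    have hιBcard : (B.image ι).card = r i := hιcard B hB
    have hIk : ((B.image ι) ∪ Cs).card = k := hIcard _ hιBsub hιBcard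
    set I2 : Finset (Fin n) := (B.image ι) ∪ Cs with hI2def
    set eB : Fin (r i) → Fin n := fun j => (B.image ι).orderEmbOfFin hιBcard j with heBdef
    have heBmem : ∀ j, eB j ∈ B.image ι := fun j => Finset.orderEmbOfFin_mem _ hιBcard j
    have heBSi : ∀ j, eB j ∈ S i := fun j => hιBsub (heBmem j)
    have heBmono : StrictMono eB := fun a b hab =>
      ((B.image ι).orderEmbOfFin hιBcard).strictMono hab
    have heCmono : StrictMono eC := fun a b hab => (Cs.orderEmbOfFin rfl).strictMono hab
    set gg : Fin (r i) ⊕ Fin cC → Fin n := Sum.elim eB eC with hggdef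
    have hggI : ∀ u, gg u ∈ I2 := by
      rintro (j | q)
      · exact Finset.mem_union_left _ (heBmem j)
      · exact Finset.mem_union_right _ (heCmem q)
    have hgginj : Function.Injective gg := by
      rintro (j | q) (j' | q') h
      · exact congrArg Sum.inl (((B.image ι).orderEmbOfFin hιBcard).injective h)
      · exact absurd ((show eB j = eC q' from h) ▸ heBSi j) (hCsnotSi _ (heCmem q'))
      · exact absurd (by rw [show eC q = eB j' from h]; exact heBSi j') (hCsnotSi _ (heCmem q))
      · exact congrArg Sum.inr ((Cs.orderEmbOfFin rfl).injective h)
    set colf : Fin (r i) ⊕ Fin cC → Fin k :=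
      fun u => (I2.orderIsoOfFin hIk).symm ⟨gg u, hggI u⟩ with hcolfdef
    have hcolfinj : Function.Injective colf := by
      intro u v h
      apply hgginj
      have := congrArg (fun z => ((I2.orderIsoOfFin hIk) z : Fin n)) h
      rw [hcolfdef] at this
      simpa using this
    set colE : (Fin (r i) ⊕ Fin cC) ≃ Fin k :=
      Equiv.ofBijective colf ((Fintype.bijective_iff_injective_and_card colf).2
        ⟨hcolfinj, by simp only [Fintype.card_sum, Fintype.card_fin]; exact hkC⟩) with hcolEdef
    set embI : Fin k → Fin n := fun j => I2.orderEmbOfFin hIk j with hembIdef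
    have hembIcolf : ∀ u, embI (colf u) = gg u := by
      intro u
      show I2.orderEmbOfFin hIk (colf u) = gg u
      rw [hcolfdef]
      rw [← Finset.coe_orderIsoOfFin_apply]
      simp
    set M1 : Matrix (Fin k) (Fin k) ℝ := N.submatrix id embI with hM1def
    have hM1det : M1.det = colMinor N I2 := by
      rw [colMinor, dif_pos hIk]
      congr 1
    set G : Matrix (Fin (r i)) (Fin (r i)) ℝ := N.submatrix ρ eB with hGdef
    have hentry : ∀ u v, M1 ((rowE : _ → Fin k) u) ((colE : _ → Fin k) v)
        = N (rowf u) (gg v) := by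
      intro u v
      show N (rowE u) (embI (colf v)) = _
      rw [hembIcolf]
      rfl
    have hblocks : M1.submatrix (rowE : _ → Fin k) (colE : _ → Fin k) =
        Matrix.fromBlocks G 0 (Matrix.of fun q p => N (rowf (Sum.inr q)) (eB p)) 1 := by
      ext u v
      rcases u with p | q <;> rcases v with p' | q'
      · rw [Matrix.submatrix_apply, hentry, Matrix.fromBlocks_apply₁₁]
        rfl
      · rw [Matrix.submatrix_apply, hentry, Matrix.fromBlocks_apply₁₂]
        show N (ρ p) (eC q') = 0
        rw [hNcol _ _ (heCT q'), if_neg]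
        intro hc
        exact Finset.disjoint_left.1 hB₀Cdisj (hc ▸ hρB₀ p) (heCmem q')
      · rw [Matrix.submatrix_apply, hentry, Matrix.fromBlocks_apply₂₁]
        rfl
      · rw [Matrix.submatrix_apply, hentry, Matrix.fromBlocks_apply₂₂]
        show N (rowf (Sum.inr q)) (eC q') = _
        rw [hNcol _ _ (heCT q'), hrowfC, Matrix.one_apply]
        by_cases h : q = q'
        · rw [if_pos (congrArg eC h), if_pos h]
        · rw [if_neg (fun hc => h ((Cs.orderEmbOfFin rfl).injective hc)), if_neg h]
    have hdetblocks : (M1.submatrix (rowE : _ → Fin k) (colE : _ → Fin k)).det = G.det := by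
      rw [hblocks, Matrix.det_fromBlocks_zero₁₂, Matrix.det_one, mul_one]
    set τ : Equiv.Perm (Fin (r i) ⊕ Fin cC) := colE.trans rowE.symm with hτdef
    have hsub2 : M1.submatrix (rowE : _ → Fin k) (colE : _ → Fin k)
        = (M1.submatrix (rowE : _ → Fin k) (rowE : _ → Fin k)).submatrix id τ := by
      ext u v
      simp [Matrix.submatrix_apply, hτdef]
    have hdetperm : (M1.submatrix (rowE : _ → Fin k) (colE : _ → Fin k)).det
        = ((Equiv.Perm.sign τ : ℤ) : ℝ) * M1.det := by
      rw [hsub2, Matrix.det_permute', Matrix.det_submatrix_equiv_self]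
    -- sign decomposition
    have hτdecomp : τ = (colE.trans eqk.symm).trans (eqk.trans rowE.symm) := by
      ext u
      simp [hτdef]
    have hsign : Equiv.Perm.sign τ = sρ * Equiv.Perm.sign (colE.trans eqk.symm) := by
      rw [hτdecomp, Equiv.Perm.sign_trans, hsρdef]
    -- the merge permutation
    set θ : Equiv.Perm (Fin (r i + cC)) :=
      (finSumFinEquiv.symm.trans (colE.trans eqk.symm)).trans finSumFinEquiv with hθdef
    have hθsign : Equiv.Perm.sign θ = Equiv.Perm.sign (colE.trans eqk.symm) := by
      rw [hθdef]
      exact Equiv.Perm.sign_symm_trans_trans _ _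
    have hvalθ : ∀ z, ((θ z : Fin (r i + cC)) : ℕ)
        = ((colE (finSumFinEquiv.symm z) : Fin k) : ℕ) := by
      intro z
      show ((finSumFinEquiv (eqk.symm (colE (finSumFinEquiv.symm z))) : Fin (r i + cC)) : ℕ) = _
      rw [heqkdef]
      simp
    have hcolle : ∀ u v, colE u ≤ colE v ↔ gg u ≤ gg v := by
      intro u v
      show colf u ≤ colf v ↔ _
      rw [hcolfdef]
      simp only
      rw [(I2.orderIsoOfFin hIk).symm.le_iff_le]
      exact Subtype.mk_le_mk
    have hθle : ∀ x y, θ x ≤ θ y ↔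
        Sum.elim eB eC (finSumFinEquiv.symm x) ≤ Sum.elim eB eC (finSumFinEquiv.symm y) := by
      intro x y
      rw [Fin.le_def, hvalθ, hvalθ, ← Fin.le_def]
      exact hcolle _ _
    have hmerge := sign_merge_blocks eB eC heBmono heCmono θ hθle
    have hsignB : Equiv.Perm.sign (colE.trans eqk.symm) = ∏ p : Fin (r i), sgn1 (eB p) := by
      rw [← hθsign, hmerge]
    -- compute the minor of Afin
    set eB' : Fin (r i) → Fin (S i).card := fun j => B.orderEmbOfFin hB j with heB'def
    have heB'eB : ∀ j, ι (eB' j) = eB j := by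
      have hcomp : (fun j => ι (B.orderEmbOfFin hB j)) = eB := by
        rw [heBdef]
        apply Finset.orderEmbOfFin_unique hιBcard
        · intro x
          exact Finset.mem_image_of_mem ι (Finset.orderEmbOfFin_mem _ hB x)
        · exact (((S i).orderEmbOfFin rfl).strictMono).comp (B.orderEmbOfFin hB).strictMono
      exact congrFun hcomp
    set uu : Fin (r i) → ℝ := fun p => if (p : ℕ) = 0 then ((sρ : ℤ) : ℝ) else 1 with huudef
    set vv : Fin (r i) → ℝ := fun j => ((sgn1 (eB j) : ℤ) : ℝ) with hvvdef
    have hAfinsub : Afin.submatrix id (fun j => ((B.orderIsoOfFin hB) j : Fin (S i).card))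
        = Matrix.of (fun p j => uu p * ((Matrix.of fun p j => vv j * G p j) p j)) := by
      ext p j
      show Afin p (eB' j) = uu p * (vv j * G p j)
      rw [hAfindef]
      simp only [Matrix.of_apply]
      rw [heB'eB]
      rfl
    have hdetAfin : colMinor Afin B
        = (∏ p : Fin (r i), uu p) * ((∏ j : Fin (r i), vv j) * G.det) := by
      rw [colMinor, dif_pos hB, hAfinsub, Matrix.det_mul_column, Matrix.det_mul_row]
    have hprodu : (∏ p : Fin (r i), uu p) = ((sρ : ℤ) : ℝ) := by
      rw [huudef]
      rw [Finset.prod_eq_single (⟨0, hrpos⟩ : Fin (r i))]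
      · simp
      · intro b _ hb
        rw [if_neg]
        intro hc
        exact hb (Fin.ext hc)
      · intro h
        exact absurd (Finset.mem_univ _) h
    have hprodv : (∏ j : Fin (r i), vv j) = (((∏ p : Fin (r i), sgn1 (eB p) : ℤˣ) : ℤ) : ℝ) := by
      rw [hvvdef]
      push_cast
      rfl
    -- assemble
    set z : ℤˣ := sρ * ∏ p : Fin (r i), sgn1 (eB p) with hzdef
    have hzz : ((z : ℤ) : ℝ) * ((z : ℤ) : ℝ) = 1 := by
      have : z * z = 1 := by
        rw [hzdef]
        have h1 : sρ * sρ = 1 := Int.units_mul_self sρ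
        have h2 : (∏ p : Fin (r i), sgn1 (eB p)) * (∏ p : Fin (r i), sgn1 (eB p)) = 1 :=
          Int.units_mul_self _
        calc (sρ * ∏ p : Fin (r i), sgn1 (eB p)) * (sρ * ∏ p : Fin (r i), sgn1 (eB p))
            = (sρ * sρ) * ((∏ p : Fin (r i), sgn1 (eB p)) * (∏ p : Fin (r i), sgn1 (eB p))) :=
              mul_mul_mul_comm _ _ _ _
          _ = 1 := by rw [h1, h2, mul_one]
      calc ((z : ℤ) : ℝ) * ((z : ℤ) : ℝ) = (((z * z : ℤˣ) : ℤ) : ℝ) := by push_cast; rfl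
        _ = 1 := by rw [this]; norm_num
    have hGdet : G.det = ((z : ℤ) : ℝ) * colMinor N I2 := by
      rw [← hdetblocks, hdetperm, hM1det, hsign, hsignB, hzdef]
    have hfin : colMinor Afin B = colMinor N I2 := by
      rw [hdetAfin, hprodu, hprodv, hGdet]
      have : ((sρ : ℤ) : ℝ) * (((∏ p : Fin (r i), sgn1 (eB p) : ℤˣ) : ℤ) : ℝ)
          = ((z : ℤ) : ℝ) := by
        rw [hzdef]; push_cast; ring
      calc ((sρ : ℤ) : ℝ) * ((((∏ p : Fin (r i), sgn1 (eB p) : ℤˣ) : ℤ) : ℝ)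
              * (((z : ℤ) : ℝ) * colMinor N I2))
          = (((sρ : ℤ) : ℝ) * (((∏ p : Fin (r i), sgn1 (eB p) : ℤˣ) : ℤ) : ℝ))
              * ((z : ℤ) : ℝ) * colMinor N I2 := by ring
        _ = ((z : ℤ) : ℝ) * ((z : ℤ) : ℝ) * colMinor N I2 := by rw [this]
        _ = colMinor N I2 := by rw [hzz, one_mul]
    rw [hfin, hminorN _ hIk]
  -- the iff
  have hiff : ∀ B : Finset (Fin (S i).card), B.card = r i →
      (B.image ι ∈ Bs i ↔ colMinor Afin B ≠ 0) := by
    intro B hB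
    rw [key _ (hιsub B) (hιcard B hB), mainMinor B hB]
    rw [mul_ne_zero_iff]
    constructor
    · intro h; exact ⟨inv_ne_zero hdQne, h⟩
    · intro h; exact h.2
  -- the distinguished basis columns
  have hιsurj : ∀ b ∈ S i, ∃ q, ι q = b := by
    intro b hb
    refine ⟨((S i).orderIsoOfFin rfl).symm ⟨b, hb⟩, ?_⟩
    show (S i).orderEmbOfFin rfl _ = b
    rw [← Finset.coe_orderIsoOfFin_apply]
    simp
  set B₀' : Finset (Fin (S i).card) := Finset.univ.filter (fun q => ι q ∈ B₀) with hB₀'def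
  have hB₀'card : B₀'.card = r i := by
    rw [← hB₀card]
    apply Finset.card_bij (fun q _ => ι q)
    · intro q hq; exact (Finset.mem_filter.1 hq).2
    · intro q hq q' hq' h; exact hιinj h
    · intro b hb
      obtain ⟨q, hq⟩ := hιsurj b (hB₀S hb)
      exact ⟨q, Finset.mem_filter.2 ⟨Finset.mem_univ _, hq ▸ hb⟩, hq⟩
  have hB₀'image : B₀'.image ι = B₀ := by
    ext a
    rw [Finset.mem_image]
    constructor
    · rintro ⟨q, hq, rfl⟩
      exact (Finset.mem_filter.1 hq).2
    · intro ha
      obtain ⟨q, hq⟩ := hιsurj a (hB₀S ha)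
      exact ⟨q, Finset.mem_filter.2 ⟨Finset.mem_univ _, hq ▸ ha⟩, hq⟩
  have hAfinB₀' : colMinor Afin B₀' ≠ 0 := by
    rw [mainMinor _ hB₀'card, hB₀'image]
    exact mul_ne_zero (inv_ne_zero hdQne) ((hAbasis _).1 hTM).2
  refine ⟨Afin, ?_, ?_, ?_⟩
  · -- rank
    refine le_antisymm ?_ ?_
    · calc Afin.rank ≤ Fintype.card (Fin (r i)) := Matrix.rank_le_card_height Afin
        _ = r i := Fintype.card_fin _
    · set P : Matrix (Fin (S i).card) (Fin (r i)) ℝ :=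
        fun q j => if q = B₀'.orderEmbOfFin hB₀'card j then 1 else 0 with hPdef
      have hmul : Afin * P = Afin.submatrix id (fun j => B₀'.orderEmbOfFin hB₀'card j) := by
        ext p j
        rw [Matrix.mul_apply]
        simp [hPdef, Matrix.submatrix_apply]
      have hdet : (Afin * P).det ≠ 0 := by
        rw [hmul]
        have := hAfinB₀'
        rw [colMinor, dif_pos hB₀'card] at this
        exact this
      have hU : IsUnit (Afin * P) :=
        (Matrix.isUnit_iff_isUnit_det _).2 (isUnit_iff_ne_zero.2 hdet)
      have h1 : (Afin * P).rank = r i := by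
        rw [Matrix.rank_of_isUnit _ hU, Fintype.card_fin]
      have h2 : (Afin * P).rank ≤ Afin.rank := Matrix.rank_mul_le_left _ _
      omega
  · -- nonneg minors
    intro I
    by_cases h : I.card = r i
    · rw [mainMinor I h]
      exact mul_nonneg (inv_nonneg.2 hdQpos.le) (hApos _)
    · rw [colMinor, dif_neg h]
  · -- bases iff
    intro B hB
    exact hiff B hB


end AuxProof

end PositroidPaper
end

section
/- Let J = (J_1,…,J_n) be a Grassmann necklace of type (k,n) with 1 ≤ k ≤ n. For each i ∈ [n], write the elements of J_i as a_1^i <_i a_2^i <_i ⋯ <_i a_k^i. Then the positroid polytope P_J := conv{e_B : B ∈ B(J)} equals the set of x ∈ ℝ^n satisfying: x_1 + x_2 + ⋯ + x_n = k; x_i ≥ 0 for all i ∈ [n]; and x_{[i, a_j^i]} ≤ j−1 for all i ∈ [n] and j ∈ [k]. -/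
namespace PositroidPaper

variable {n : ℕ}

open Finset


section LinOrd

variable {α : Type*} [LinearOrder α] {k : ℕ}

lemma fin_filter_val_lt_card (m : ℕ) (hm : m ≤ k) :
    (Finset.univ.filter (fun l : Fin k => l.val < m)).card = m := by
  rw [← Finset.card_range m]
  apply Finset.card_bij (fun l _ => l.val)
  · intro l hl; simp only [Finset.mem_filter] at hl; simpa using hl.2
  · intro l hl l' hl' h; exact Fin.val_injective h
  · intro b hb
    simp only [Finset.mem_range] at hb
    exact ⟨⟨b, lt_of_lt_of_le hb hm⟩, by simp [hb], rfl⟩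

lemma orderEmbOfFin_lt_iff_count {B : Finset α} (hB : B.card = k)
    (j : Fin k) (c : α) :
    B.orderEmbOfFin hB j < c ↔ (j : ℕ) < (B.filter (· < c)).card := by
  classical
  constructor
  · intro h
    have hsub : ((Finset.univ.filter (fun l : Fin k => l.val < j.val + 1)).image
        (fun l => B.orderEmbOfFin hB l)) ⊆ B.filter (· < c) := by
      intro b hb
      simp only [Finset.mem_image, Finset.mem_filter, Finset.mem_univ, true_and] at hb ⊢
      obtain ⟨l, hl, rfl⟩ := hb
      refine ⟨Finset.orderEmbOfFin_mem _ _ _, lt_of_le_of_lt ?_ h⟩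
      exact (B.orderEmbOfFin hB).monotone (by omega : l ≤ j)
    have hcard := Finset.card_le_card hsub
    rwa [Finset.card_image_of_injective _ (B.orderEmbOfFin hB).injective,
      fin_filter_val_lt_card (j.val + 1) (by omega)] at hcard
  · intro h
    by_contra hc
    push_neg at hc
    have hsub : B.filter (· < c) ⊆
        (Finset.univ.filter (fun l : Fin k => l.val < j.val)).image
          (fun l => B.orderEmbOfFin hB l) := by
      intro b hb
      simp only [Finset.mem_filter] at hb
      obtain ⟨hbB, hbc⟩ := hb
      obtain ⟨l, hl⟩ : ∃ l, B.orderEmbOfFin hB l = b := by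
        have : b ∈ Set.range (B.orderEmbOfFin hB) := by
          rw [Finset.range_orderEmbOfFin]; exact hbB
        exact this
      refine Finset.mem_image.2 ⟨l, ?_, hl⟩
      simp only [Finset.mem_filter, Finset.mem_univ, true_and]
      by_contra hlj
      push_neg at hlj
      have : B.orderEmbOfFin hB j ≤ b := hl ▸ (B.orderEmbOfFin hB).monotone (by omega : j ≤ l)
      exact absurd (lt_of_le_of_lt this hbc) (not_lt.2 hc)
    have hcard := Finset.card_le_card hsub
    rw [Finset.card_image_of_injective _ (B.orderEmbOfFin hB).injective,
      fin_filter_val_lt_card j.val (by omega)] at hcard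
    omega

lemma forall2_sort_iff_counts {S B : Finset α} (hS : S.card = k) (hB : B.card = k) :
    List.Forall₂ (· ≤ ·) (S.sort (· ≤ ·)) (B.sort (· ≤ ·)) ↔
      ∀ j : Fin k, ((B.filter (· < S.orderEmbOfFin hS j)).card : ℕ) ≤ (j : ℕ) := by
  classical
  have lS : (S.sort (· ≤ ·)).length = k := by rw [Finset.length_sort, hS]
  have lB : (B.sort (· ≤ ·)).length = k := by rw [Finset.length_sort, hB]
  rw [List.forall₂_iff_get]
  constructor
  · intro ⟨_, h⟩ j
    have hj := h j.val (by omega) (by omega)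
    have hj' : S.orderEmbOfFin hS j ≤ B.orderEmbOfFin hB j := by
      rw [Finset.orderEmbOfFin_apply, Finset.orderEmbOfFin_apply]
      exact hj
    rw [← not_lt, ← orderEmbOfFin_lt_iff_count hB j _]
    exact not_lt.2 hj'
  · intro h
    refine ⟨by omega, fun i h1 h2 => ?_⟩
    have hi : i < k := by omega
    have := h ⟨i, hi⟩
    rw [← not_lt, ← orderEmbOfFin_lt_iff_count hB ⟨i, hi⟩ _] at this
    have goal : S.orderEmbOfFin hS ⟨i, hi⟩ ≤ B.orderEmbOfFin hB ⟨i, hi⟩ := not_lt.1 this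
    rw [Finset.orderEmbOfFin_apply, Finset.orderEmbOfFin_apply] at goal
    exact goal

end LinOrd




/-- partial sums -/
def psum (x : Fin n → ℝ) (c : ℕ) : ℝ :=
  ∑ a ∈ Finset.univ.filter (fun a : Fin n => a.val < c), x a

lemma sub_lt_sub_iff_val (a i m : Fin n) :
    (a - i < m - i) ↔
      (if i.val ≤ m.val then (i.val ≤ a.val ∧ a.val < m.val)
       else (a.val < m.val ∨ i.val ≤ a.val)) := by
  have ha := a.isLt
  have hi := i.isLt
  have hm := m.isLt
  have h1 := Fin.coe_int_sub_eq_ite a i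
  have h2 := Fin.coe_int_sub_eq_ite m i
  rw [Fin.lt_def, ← Nat.cast_lt (α := ℤ)]
  simp only [Fin.le_def] at h1 h2
  split_ifs at h1 h2 ⊢ <;> omega

lemma psum_zero (x : Fin n → ℝ) : psum x 0 = 0 := by
  simp [psum]

lemma psum_top (x : Fin n → ℝ) : psum x n = ∑ a, x a := by
  unfold psum
  congr 1
  apply Finset.filter_true_of_mem
  exact fun a _ => a.isLt

lemma psum_chunk (x : Fin n → ℝ) {c d : ℕ} (h : c ≤ d) :
    psum x d = psum x c +
      ∑ a ∈ Finset.univ.filter (fun a : Fin n => c ≤ a.val ∧ a.val < d), x a := by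
  have hsub : Finset.univ.filter (fun a : Fin n => a.val < c) ⊆
      Finset.univ.filter (fun a : Fin n => a.val < d) := by
    intro a ha; simp only [Finset.mem_filter] at ha ⊢; exact ⟨ha.1, by omega⟩
  have hdiff : Finset.univ.filter (fun a : Fin n => a.val < d) \
      Finset.univ.filter (fun a : Fin n => a.val < c) =
      Finset.univ.filter (fun a : Fin n => c ≤ a.val ∧ a.val < d) := by
    ext a; simp [Finset.mem_sdiff]; omega
  have := Finset.sum_sdiff (f := x) hsub
  rw [hdiff] at this
  unfold psum
  linarith [this]

lemma psum_succ (x : Fin n → ℝ) {c : ℕ} (h : c < n) :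
    psum x (c + 1) = psum x c + x ⟨c, h⟩ := by
  rw [psum_chunk x (Nat.le_succ c)]
  congr 1
  have : Finset.univ.filter (fun a : Fin n => c ≤ a.val ∧ a.val < c + 1) = {⟨c, h⟩} := by
    ext a; simp [Fin.ext_iff]; omega
  rw [this, Finset.sum_singleton]

lemma cycSum_eq_psum (x : Fin n → ℝ) (i m : Fin n) :
    cycSum x i m = psum x m.val - psum x i.val +
      (if m.val < i.val then ∑ a, x a else 0) := by
  unfold cycSum
  by_cases h : i.val ≤ m.val
  · rw [if_neg (by omega)]
    have hset : Finset.univ.filter (fun a : Fin n => a - i < m - i) =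
        Finset.univ.filter (fun a : Fin n => i.val ≤ a.val ∧ a.val < m.val) := by
      ext a
      simp only [Finset.mem_filter, Finset.mem_univ, true_and]
      rw [sub_lt_sub_iff_val, if_pos h]
    rw [hset]
    have hch := psum_chunk x h
    unfold psum at hch ⊢
    linarith
  · rw [if_pos (by omega)]
    push_neg at h
    have hset : Finset.univ.filter (fun a : Fin n => a - i < m - i) =
        Finset.univ.filter (fun a : Fin n => a.val < m.val) ∪
        Finset.univ.filter (fun a : Fin n => i.val ≤ a.val) := by
      ext a
      simp only [Finset.mem_filter, Finset.mem_univ, true_and, Finset.mem_union]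
      rw [sub_lt_sub_iff_val, if_neg (by omega)]
    have hdisj : Disjoint (Finset.univ.filter (fun a : Fin n => a.val < m.val))
        (Finset.univ.filter (fun a : Fin n => i.val ≤ a.val)) := by
      rw [Finset.disjoint_left]
      intro a ha ha'
      simp at ha ha'
      omega
    rw [hset, Finset.sum_union hdisj]
    have h2 : psum x n = psum x i.val +
        ∑ a ∈ Finset.univ.filter (fun a : Fin n => i.val ≤ a.val ∧ a.val < n), x a :=
      psum_chunk x (le_of_lt i.isLt)
    have h3 : Finset.univ.filter (fun a : Fin n => i.val ≤ a.val ∧ a.val < n) =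
        Finset.univ.filter (fun a : Fin n => i.val ≤ a.val) := by
      ext a; simp only [Finset.mem_filter, Finset.mem_univ, true_and, and_iff_left_iff_imp]; intro _; exact a.isLt
    rw [h3] at h2
    rw [psum_top] at h2
    unfold psum at h2 ⊢
    linarith



lemma sub_right_injective [NeZero n] (i : Fin n) : Function.Injective (fun a : Fin n => a - i) :=
  (Equiv.subRight i).injective

lemma cycSum_indic (B : Finset (Fin n)) (i m : Fin n) :
    cycSum (indic B) i m = ((B.filter (fun b => b - i < m - i)).card : ℝ) := by
  classical
  unfold cycSum indic
  rw [Finset.sum_boole]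
  congr 2
  ext a
  simp only [Finset.mem_filter, Finset.mem_univ, true_and]
  exact and_comm

lemma sum_indic (B : Finset (Fin n)) : ∑ a, indic B a = (B.card : ℝ) := by
  classical
  unfold indic
  rw [Finset.sum_boole]
  congr 2
  rw [Finset.filter_mem_eq_inter, Finset.univ_inter]

lemma card_filter_image [NeZero n] (B : Finset (Fin n)) (i : Fin n) (c : Fin n) :
    ((B.image (fun a => a - i)).filter (· < c)).card
      = (B.filter (fun b => b - i < c)).card := by
  classical
  rw [Finset.filter_image, Finset.card_image_of_injective _ (sub_right_injective i)]

lemma galeLE_iff_counts [NeZero n] {k : ℕ} (i : Fin n) {S B : Finset (Fin n)}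
    (hS : (S.image (fun a => a - i)).card = k) (hB : B.card = k) :
    galeLE i S B ↔ ∀ j : Fin k,
      (B.filter (fun b => b - i <
        (S.image (fun a => a - i)).orderEmbOfFin hS j)).card ≤ (j : ℕ) := by
  classical
  have hB' : (B.image (fun a => a - i)).card = k := by
    rw [Finset.card_image_of_injective _ (sub_right_injective i), hB]
  rw [galeLE, forall2_sort_iff_counts hS hB']
  refine forall_congr' (fun j => ?_)
  rw [card_filter_image]

lemma nthGale_eq [NeZero n] {k : ℕ} (i : Fin n) {S : Finset (Fin n)}
    (hS : (S.image (fun a => a - i)).card = k) (j : Fin k) :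
    nthGale i S j.val = (S.image (fun a => a - i)).orderEmbOfFin hS j + i := by
  unfold nthGale
  congr 1
  have hlen : ((S.image (fun a => a - i)).sort (· ≤ ·)).length = k := by
    rw [Finset.length_sort, hS]
  rw [List.getD_eq_getElem _ _ (by omega), Finset.orderEmbOfFin_apply]
  rfl

lemma nthGale_sub [NeZero n] {k : ℕ} (i : Fin n) {S : Finset (Fin n)}
    (hS : (S.image (fun a => a - i)).card = k) (j : Fin k) :
    nthGale i S j.val - i = (S.image (fun a => a - i)).orderEmbOfFin hS j := by
  rw [nthGale_eq i hS j, add_sub_cancel_right]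

lemma ceil_fract_sub {t : ℝ} (ht0 : 0 ≤ t) (ht1 : t < 1) (y : ℝ) :
    ⌈y - t⌉ = ⌊y⌋ + (if t < Int.fract y then 1 else 0) := by
  have hy : y - t = (Int.fract y - t) + (⌊y⌋ : ℝ) := by
    have := Int.floor_add_fract y
    linarith
  rw [hy, Int.ceil_add_intCast]
  have hf0 := Int.fract_nonneg y
  have hf1 := Int.fract_lt_one y
  split_ifs with h
  · have h1 : ⌈Int.fract y - t⌉ = 1 := by
      rw [Int.ceil_eq_iff]
      constructor <;> push_cast <;> linarith
    omega
  · push_neg at h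
    have : ⌈Int.fract y - t⌉ = 0 := by
      rw [Int.ceil_eq_iff]
      constructor <;> push_cast <;> linarith
    omega

lemma ceil_diff_le {u v : ℝ} {r : ℤ} (h : u - v ≤ r) (t : ℝ) :
    ⌈u - t⌉ - ⌈v - t⌉ ≤ r := by
  have h1 : u - t ≤ (v - t) + r := by linarith
  have h2 := Int.ceil_le_ceil h1
  rw [Int.ceil_add_intCast] at h2
  omega

lemma psum_diff_fun (g : ℕ → ℝ) : ∀ {c : ℕ}, c ≤ n →
    psum (fun a : Fin n => g (a.val + 1) - g a.val) c = g c - g 0 := by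
  intro c
  induction c with
  | zero => intro _; rw [psum_zero]; ring
  | succ c ih =>
    intro hc
    have hcn : c < n := by omega
    rw [psum_succ _ hcn, ih (le_of_lt hcn)]
    ring

noncomputable def Zfun (x : Fin n → ℝ) (t : ℝ) (c : ℕ) : ℤ := ⌈psum x c - t⌉

noncomputable def roundX (x : Fin n → ℝ) (t : ℝ) : Fin n → ℝ :=
  fun a => ((Zfun x t (a.val + 1) - Zfun x t a.val : ℤ) : ℝ)

noncomputable def roundB (x : Fin n → ℝ) (t : ℝ) : Finset (Fin n) :=
  Finset.univ.filter (fun a => Zfun x t (a.val + 1) = Zfun x t a.val + 1)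

variable {x : Fin n → ℝ}

lemma Zfun_mono (hx2 : ∀ a, 0 ≤ x a) (t : ℝ) (a : Fin n) :
    Zfun x t a.val ≤ Zfun x t (a.val + 1) := by
  have h := psum_succ x a.isLt
  have h0 : psum x a.val - psum x (a.val + 1) ≤ ((0 : ℤ) : ℝ) := by
    have := hx2 ⟨a.val, a.isLt⟩
    push_cast
    linarith
  have := ceil_diff_le h0 t
  unfold Zfun
  omega

lemma Zfun_step (hx2' : ∀ a, x a ≤ 1) (t : ℝ) (a : Fin n) :
    Zfun x t (a.val + 1) ≤ Zfun x t a.val + 1 := by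
  have h := psum_succ x a.isLt
  have h0 : psum x (a.val + 1) - psum x a.val ≤ ((1 : ℤ) : ℝ) := by
    have := hx2' ⟨a.val, a.isLt⟩
    push_cast
    linarith
  have := ceil_diff_le h0 t
  unfold Zfun
  omega

lemma Zfun_zero {t : ℝ} (ht0 : 0 ≤ t) (ht1 : t < 1) : Zfun x t 0 = 0 := by
  unfold Zfun
  rw [psum_zero, Int.ceil_eq_iff]
  constructor <;> push_cast <;> linarith

lemma Zfun_top {k : ℕ} (hx1 : ∑ a, x a = (k : ℝ)) {t : ℝ} (ht0 : 0 ≤ t) (ht1 : t < 1) :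
    Zfun x t n = k := by
  unfold Zfun
  rw [psum_top, hx1, Int.ceil_eq_iff]
  constructor <;> push_cast <;> linarith

lemma roundX_eq (t : ℝ) :
    roundX x t = fun a : Fin n =>
      (fun c => ((Zfun x t c : ℤ) : ℝ)) (a.val + 1) - (fun c => ((Zfun x t c : ℤ) : ℝ)) a.val := by
  funext a
  unfold roundX
  push_cast
  ring

lemma roundX_psum (t : ℝ) {c : ℕ} (hc : c ≤ n) :
    psum (roundX x t) c = ((Zfun x t c : ℤ) : ℝ) - ((Zfun x t 0 : ℤ) : ℝ) := by
  rw [roundX_eq]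
  exact psum_diff_fun (fun c => ((Zfun x t c : ℤ) : ℝ)) hc

lemma roundX_zero_or_one (hx2 : ∀ a, 0 ≤ x a) (hx2' : ∀ a, x a ≤ 1) (t : ℝ) (a : Fin n) :
    roundX x t a = 0 ∨ roundX x t a = 1 := by
  have h1 := Zfun_mono hx2 t a
  have h2 := Zfun_step hx2' t a
  unfold roundX
  have : Zfun x t (a.val + 1) - Zfun x t a.val = 0 ∨
      Zfun x t (a.val + 1) - Zfun x t a.val = 1 := by omega
  rcases this with h | h <;> [left; right] <;> rw [h] <;> norm_num

lemma indic_roundB (hx2 : ∀ a, 0 ≤ x a) (hx2' : ∀ a, x a ≤ 1) (t : ℝ) :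
    indic (roundB x t) = roundX x t := by
  classical
  funext a
  unfold indic roundB
  by_cases h : Zfun x t (a.val + 1) = Zfun x t a.val + 1
  · rw [if_pos (by simp [h])]
    unfold roundX
    rw [h]
    push_cast
    ring
  · rw [if_neg (by simp [h])]
    rcases roundX_zero_or_one hx2 hx2' t a with h0 | h1
    · exact h0.symm
    · exfalso
      apply h
      unfold roundX at h1
      have : ((Zfun x t (a.val + 1) - Zfun x t a.val : ℤ) : ℝ) = ((1 : ℤ) : ℝ) := by
        push_cast at h1 ⊢
        linarith
    
      have := Int.cast_injective (α := ℝ) this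
      omega

lemma psum_constraint_roundX {k : ℕ} [NeZero n] {J : Fin n → Finset (Fin n)}
    (hcard' : ∀ i : Fin n, ((J i).image (fun a => a - i)).card = k)
    (hx1 : ∑ a, x a = (k : ℝ)) (hx2 : ∀ a, 0 ≤ x a)
    (hkey : ∀ (i : Fin n) (j : Fin k),
      psum x (nthGale i (J i) j.val).val - psum x i.val ≤
        (((j.val : ℤ) - if (nthGale i (J i) j.val).val < i.val then (k : ℤ) else 0 : ℤ) : ℝ))
    {t : ℝ} (ht0 : 0 ≤ t) (ht1 : t < 1) (i : Fin n) (j : Fin k) :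
    cycSum (roundX x t) i (nthGale i (J i) j.val) ≤ (j.val : ℝ) := by
  set m := nthGale i (J i) j.val with hm
  have hZd : Zfun x t m.val - Zfun x t i.val ≤
      ((j.val : ℤ) - if m.val < i.val then (k : ℤ) else 0) := by
    have h0 := hkey i j
    rw [← hm] at h0
    exact ceil_diff_le h0 t
  have hsum : ∑ a, roundX x t a = (k : ℝ) := by
    rw [← psum_top, roundX_psum t le_rfl, Zfun_top hx1 ht0 ht1, Zfun_zero ht0 ht1]
    push_cast
    ring
  rw [cycSum_eq_psum, hsum, roundX_psum t (le_of_lt m.isLt), roundX_psum t (le_of_lt i.isLt),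
    Zfun_zero ht0 ht1]
  have hZdR : ((Zfun x t m.val : ℤ) : ℝ) - ((Zfun x t i.val : ℤ) : ℝ) ≤
      (((j.val : ℤ) - if m.val < i.val then (k : ℤ) else 0 : ℤ) : ℝ) := by
    exact_mod_cast hZd
  split_ifs at hZdR ⊢ <;> push_cast at hZdR ⊢ <;> linarith

lemma roundB_mem {k : ℕ} [NeZero n] {J : Fin n → Finset (Fin n)}
    (hcard' : ∀ i : Fin n, ((J i).image (fun a => a - i)).card = k)
    (hx1 : ∑ a, x a = (k : ℝ)) (hx2 : ∀ a, 0 ≤ x a) (hx2' : ∀ a, x a ≤ 1)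
    (hkey : ∀ (i : Fin n) (j : Fin k),
      psum x (nthGale i (J i) j.val).val - psum x i.val ≤
        (((j.val : ℤ) - if (nthGale i (J i) j.val).val < i.val then (k : ℤ) else 0 : ℤ) : ℝ))
    {t : ℝ} (ht0 : 0 ≤ t) (ht1 : t < 1) :
    roundB x t ∈ necklaceBases n k J := by
  classical
  have hindic := indic_roundB hx2 hx2' t
  have hcardBt : (roundB x t).card = k := by
    have h : ((roundB x t).card : ℝ) = (k : ℝ) := by
      rw [← sum_indic, hindic, ← psum_top, roundX_psum t le_rfl, Zfun_top hx1 ht0 ht1,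
        Zfun_zero ht0 ht1]
      push_cast
      ring
    exact_mod_cast h
  have hgale : ∀ i, galeLE i (J i) (roundB x t) := by
    intro i
    rw [galeLE_iff_counts i (hcard' i) hcardBt]
    intro j
    have h := psum_constraint_roundX hcard' hx1 hx2 hkey ht0 ht1 i j
    rw [← hindic] at h
    rw [cycSum_indic] at h
    rw [nthGale_sub i (hcard' i) j] at h
    exact_mod_cast h
  unfold necklaceBases
  rw [Finset.mem_filter, Finset.mem_powersetCard]
  exact ⟨⟨Finset.subset_univ _, hcardBt⟩, hgale⟩

noncomputable def fracD (x : Fin n → ℝ) : Finset ℝ :=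
  (Finset.range (n + 1)).image (fun c => Int.fract (psum x c))

noncomputable def fracL (x : Fin n → ℝ) : List ℝ := (fracD x).sort (· ≤ ·)

noncomputable def mlen (x : Fin n → ℝ) : ℕ := (fracL x).length

noncomputable def Tfun (x : Fin n → ℝ) (l : ℕ) : ℝ := (fracL x).getD l 1

variable {x : Fin n → ℝ}

lemma fracD_nonneg {f : ℝ} (hf : f ∈ fracD x) : 0 ≤ f := by
  rw [fracD, Finset.mem_image] at hf
  obtain ⟨c, -, rfl⟩ := hf
  exact Int.fract_nonneg _

lemma fracD_lt_one {f : ℝ} (hf : f ∈ fracD x) : f < 1 := by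
  rw [fracD, Finset.mem_image] at hf
  obtain ⟨c, -, rfl⟩ := hf
  exact Int.fract_lt_one _

lemma zero_mem_fracD : (0 : ℝ) ∈ fracD x := by
  rw [fracD, Finset.mem_image]
  exact ⟨0, Finset.mem_range.2 (by omega), by rw [psum_zero, Int.fract_zero]⟩

lemma mlen_pos : 0 < mlen x := by
  rw [mlen, fracL, Finset.length_sort]
  exact Finset.card_pos.2 ⟨0, zero_mem_fracD⟩

lemma Tfun_mem {l : ℕ} (hl : l < mlen x) : Tfun x l ∈ fracD x := by
  rw [Tfun, List.getD_eq_getElem _ _ hl]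
  exact (Finset.mem_sort _).1 (List.getElem_mem _)

lemma Tfun_default {l : ℕ} (hl : mlen x ≤ l) : Tfun x l = 1 :=
  List.getD_eq_default _ _ hl

lemma Tfun_strict {l l' : ℕ} (h : l < l') (hl' : l' < mlen x) : Tfun x l < Tfun x l' := by
  rw [Tfun, Tfun, List.getD_eq_getElem _ _ (lt_trans h hl'), List.getD_eq_getElem _ _ hl']
  exact (Finset.sortedLT_sort (fracD x)).getElem_lt_getElem_iff.2 h

lemma Tfun_mono {l l' : ℕ} (h : l ≤ l') (hl' : l' < mlen x) : Tfun x l ≤ Tfun x l' := by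
  rcases eq_or_lt_of_le h with rfl | hlt
  · exact le_rfl
  · exact le_of_lt (Tfun_strict hlt hl')

lemma Tfun_zero : Tfun x 0 = 0 := by
  obtain ⟨r, hr, hrf⟩ := List.mem_iff_getElem.1 ((Finset.mem_sort (α := ℝ) (· ≤ ·)).2 (zero_mem_fracD (x := x)))
  have hTr : Tfun x r = 0 := by rw [Tfun, fracL, List.getD_eq_getElem _ _ hr, hrf]
  refine le_antisymm ?_ (fracD_nonneg (Tfun_mem mlen_pos))
  rw [← hTr]
  exact Tfun_mono (Nat.zero_le r) hr

lemma Tfun_step_nonneg {l : ℕ} (hl : l < mlen x) : 0 ≤ Tfun x (l + 1) - Tfun x l := by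
  rcases lt_or_ge (l + 1) (mlen x) with h | h
  · linarith [Tfun_mono (Nat.le_succ l) h]
  · rw [Tfun_default h]
    linarith [fracD_lt_one (Tfun_mem hl)]

lemma Tfun_wsum : ∑ l ∈ Finset.range (mlen x), (Tfun x (l + 1) - Tfun x l) = 1 := by
  rw [Finset.sum_range_sub (f := Tfun x), Tfun_default le_rfl, Tfun_zero]
  ring

lemma key_sum {c : ℕ} (hc : c ≤ n) :
    ∑ l ∈ Finset.range (mlen x),
      (Tfun x (l + 1) - Tfun x l) * ((Zfun x (Tfun x l) c : ℤ) : ℝ) = psum x c := by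
  classical
  obtain ⟨r, hr, hrf⟩ := List.mem_iff_getElem.1 ((Finset.mem_sort (α := ℝ) (· ≤ ·)).2
    (show Int.fract (psum x c) ∈ fracD x from by
      rw [fracD, Finset.mem_image]
      exact ⟨c, Finset.mem_range.2 (by omega), rfl⟩))
  have hTr : Tfun x r = Int.fract (psum x c) := by
    rw [Tfun, fracL, List.getD_eq_getElem _ _ hr, hrf]
  have hcond : ∀ l, l < mlen x → (Tfun x l < Int.fract (psum x c) ↔ l < r) := by
    intro l hl
    constructor
    · intro hlt
      by_contra hge
      push_neg at hge
      have := Tfun_mono hge hl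
      rw [hTr] at this
      linarith
    · intro hlt
      have := Tfun_strict hlt hr
      rwa [hTr] at this
  have hterm : ∀ l ∈ Finset.range (mlen x),
      (Tfun x (l + 1) - Tfun x l) * ((Zfun x (Tfun x l) c : ℤ) : ℝ) =
        (Tfun x (l + 1) - Tfun x l) * ((⌊psum x c⌋ : ℤ) : ℝ) +
          (if l < r then (Tfun x (l + 1) - Tfun x l) else 0) := by
    intro l hl
    rw [Finset.mem_range] at hl
    have hZ : Zfun x (Tfun x l) c = ⌊psum x c⌋ +
        (if Tfun x l < Int.fract (psum x c) then 1 else 0) := by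
      unfold Zfun
      exact ceil_fract_sub (fracD_nonneg (Tfun_mem hl)) (fracD_lt_one (Tfun_mem hl)) _
    rw [hZ]
    push_cast
    split_ifs with h1 h2 h2
    · ring
    · exact absurd ((hcond l hl).1 h1) h2
    · exact absurd ((hcond l hl).2 h2) h1
    · ring
  rw [Finset.sum_congr rfl hterm, Finset.sum_add_distrib, ← Finset.sum_mul, Tfun_wsum, one_mul]
  have hrm : r ≤ mlen x := le_of_lt hr
  have hfilter : (Finset.range (mlen x)).filter (fun l => l < r) = Finset.range r := by
    ext l
    simp only [Finset.mem_filter, Finset.mem_range]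
    omega
  rw [← Finset.sum_filter, hfilter, Finset.sum_range_sub (f := Tfun x), Tfun_zero, hTr]
  have := Int.floor_add_fract (psum x c)
  linarith

lemma sum_w_roundX (a : Fin n) :
    ∑ l ∈ Finset.range (mlen x),
      (Tfun x (l + 1) - Tfun x l) * roundX x (Tfun x l) a = x a := by
  have h1 := key_sum (x := x) (c := a.val + 1) a.isLt
  have h2 := key_sum (x := x) (c := a.val) (le_of_lt a.isLt)
  have h3 := psum_succ x a.isLt
  have heta : x ⟨a.val, a.isLt⟩ = x a := congrArg x (Fin.eta a a.isLt)
  have hterm : ∀ l ∈ Finset.range (mlen x),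
      (Tfun x (l + 1) - Tfun x l) * roundX x (Tfun x l) a =
        (Tfun x (l + 1) - Tfun x l) * ((Zfun x (Tfun x l) (a.val + 1) : ℤ) : ℝ) -
          (Tfun x (l + 1) - Tfun x l) * ((Zfun x (Tfun x l) a.val : ℤ) : ℝ) := by
    intro l _
    unfold roundX
    push_cast
    ring
  rw [Finset.sum_congr rfl hterm, Finset.sum_sub_distrib, h1, h2]
  rw [h3, heta]
  ring

theorem positroid_polytope_inequality_description
    (n k : ℕ) [NeZero n] (hk1 : 1 ≤ k) (hkn : k ≤ n)
    (J : Fin n → Finset (Fin n)) (hJ : IsGrassmannNecklace n k J) :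
    PJ n k J =
      {x : Fin n → ℝ | (∑ a, x a) = (k : ℝ) ∧ (∀ a, 0 ≤ x a) ∧
        ∀ i : Fin n, ∀ j : Fin k, cycSum x i (nthGale i (J i) j.val) ≤ (j.val : ℝ)} := by
  classical
  have hcard : ∀ i : Fin n, (J i).card = k := hJ.1
  have hcard' : ∀ i : Fin n, ((J i).image (fun a => a - i)).card = k := fun i => by
    rw [Finset.card_image_of_injective _ (sub_right_injective i), hcard i]
  apply Set.Subset.antisymm
  · -- P_J ⊆ inequality description
    unfold PJ
    apply convexHull_min
    · rintro y ⟨B, hB, rfl⟩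
      unfold necklaceBases at hB
      rw [Finset.mem_filter, Finset.mem_powersetCard] at hB
      obtain ⟨⟨-, hBcard⟩, hgale⟩ := hB
      refine ⟨by rw [sum_indic, hBcard], fun a => by unfold indic; split <;> norm_num, ?_⟩
      intro i j
      rw [cycSum_indic, nthGale_sub i (hcard' i) j]
      exact_mod_cast (galeLE_iff_counts i (hcard' i) hBcard).1 (hgale i) j
    · -- the inequality set is convex
      intro u hu v hv a b ha hb hab
      obtain ⟨hu1, hu2, hu3⟩ := hu
      obtain ⟨hv1, hv2, hv3⟩ := hv
      have hmulk : a * (k : ℝ) + b * (k : ℝ) = (k : ℝ) := by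
        have : (a + b) * (k : ℝ) = (k : ℝ) := by rw [hab, one_mul]
        linarith [this]
      refine ⟨?_, ?_, ?_⟩
      · simp only [Pi.add_apply, Pi.smul_apply, smul_eq_mul]
        rw [Finset.sum_add_distrib, ← Finset.mul_sum, ← Finset.mul_sum, hu1, hv1]
        exact hmulk
      · intro c
        simp only [Pi.add_apply, Pi.smul_apply, smul_eq_mul]
        exact add_nonneg (mul_nonneg ha (hu2 c)) (mul_nonneg hb (hv2 c))
      · intro i j
        have hlin : cycSum (a • u + b • v) i (nthGale i (J i) j.val) =
            a * cycSum u i (nthGale i (J i) j.val) +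
              b * cycSum v i (nthGale i (J i) j.val) := by
          unfold cycSum
          rw [Finset.mul_sum, Finset.mul_sum, ← Finset.sum_add_distrib]
          refine Finset.sum_congr rfl fun c _ => ?_
          simp only [Pi.add_apply, Pi.smul_apply, smul_eq_mul]
        rw [hlin]
        have h1 := hu3 i j
        have h2 := hv3 i j
        have h1' := mul_le_mul_of_nonneg_left h1 ha
        have h2' := mul_le_mul_of_nonneg_left h2 hb
        have : a * (j.val : ℝ) + b * (j.val : ℝ) = (j.val : ℝ) := by
          have : (a + b) * (j.val : ℝ) = (j.val : ℝ) := by rw [hab, one_mul]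
          linarith [this]
        linarith
  · -- inequality description ⊆ P_J
    intro x hx
    obtain ⟨hx1, hx2, hx3⟩ := hx
    have hkey : ∀ (i : Fin n) (j : Fin k),
        psum x (nthGale i (J i) j.val).val - psum x i.val ≤
          (((j.val : ℤ) - if (nthGale i (J i) j.val).val < i.val then (k : ℤ) else 0 : ℤ) : ℝ) := by
      intro i j
      have h := hx3 i j
      rw [cycSum_eq_psum, hx1] at h
      split_ifs at h ⊢ <;> push_cast <;> linarith
    -- every coordinate is at most 1
    have hx2' : ∀ a : Fin n, x a ≤ 1 := by
      intro a
      by_cases h0 : ((J a).image (fun b => b - a)).orderEmbOfFin (hcard' a) ⟨0, hk1⟩ = 0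
      · by_cases hk2 : 2 ≤ k
        · have hne : ((J a).image (fun b => b - a)).orderEmbOfFin (hcard' a) ⟨1, hk2⟩ ≠ 0 := by
            intro h
            have h2 := (((J a).image (fun b => b - a)).orderEmbOfFin (hcard' a)).injective
              (h.trans h0.symm)
            simp only [Fin.mk.injEq] at h2
            omega
          have hcon := hx3 a ⟨1, hk2⟩
          unfold cycSum at hcon
          have hmem : a ∈ Finset.univ.filter (fun c : Fin n =>
              c - a < nthGale a (J a) ((⟨1, hk2⟩ : Fin k)).val - a) := by
            rw [Finset.mem_filter]
            refine ⟨Finset.mem_univ _, ?_⟩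
            rw [nthGale_sub a (hcard' a) ⟨1, hk2⟩, sub_self]
            exact (Fin.pos_iff_ne_zero' _).2 hne
          have hle := Finset.single_le_sum (f := x) (fun c _ => hx2 c) hmem
          have : ((⟨1, hk2⟩ : Fin k).val : ℝ) = 1 := by norm_num
          linarith [hcon, hle]
        · have hk : k = 1 := by omega
          have hle := Finset.single_le_sum (f := x) (fun c (_ : c ∈ Finset.univ) => hx2 c)
            (Finset.mem_univ a)
          rw [hx1, hk] at hle
          exact_mod_cast hle
      · have hcon := hx3 a ⟨0, hk1⟩
        unfold cycSum at hcon
        have hmem : a ∈ Finset.univ.filter (fun c : Fin n =>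
            c - a < nthGale a (J a) ((⟨0, hk1⟩ : Fin k)).val - a) := by
          rw [Finset.mem_filter]
          refine ⟨Finset.mem_univ _, ?_⟩
          rw [nthGale_sub a (hcard' a) ⟨0, hk1⟩, sub_self]
          exact (Fin.pos_iff_ne_zero' _).2 h0
        have hle := Finset.single_le_sum (f := x) (fun c _ => hx2 c) hmem
        have : ((⟨0, hk1⟩ : Fin k).val : ℝ) = 0 := by norm_num
        linarith [hcon, hle]
    -- decomposition into rounded 0/1 points
    have hw0 : ∀ l ∈ Finset.range (mlen x), 0 ≤ Tfun x (l + 1) - Tfun x l := by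
      intro l hl
      exact Tfun_step_nonneg (Finset.mem_range.1 hl)
    have hz : ∀ l ∈ Finset.range (mlen x),
        indic (roundB x (Tfun x l)) ∈ {y : Fin n → ℝ | ∃ B ∈ necklaceBases n k J, y = indic B} := by
      intro l hl
      rw [Finset.mem_range] at hl
      exact ⟨roundB x (Tfun x l),
        roundB_mem hcard' hx1 hx2 hx2' hkey (fracD_nonneg (Tfun_mem hl))
          (fracD_lt_one (Tfun_mem hl)), rfl⟩
    unfold PJ
    have hcm := Finset.centerMass_mem_convexHull (Finset.range (mlen x))
      (w := fun l => Tfun x (l + 1) - Tfun x l)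
      (z := fun l => indic (roundB x (Tfun x l))) hw0
      (by rw [Tfun_wsum]; norm_num) hz
    have hxeq : (Finset.range (mlen x)).centerMass (fun l => Tfun x (l + 1) - Tfun x l)
        (fun l => indic (roundB x (Tfun x l))) = x := by
      rw [Finset.centerMass_eq_of_sum_1 _ _ Tfun_wsum]
      funext a
      rw [Finset.sum_apply]
      have hterm : ∀ l ∈ Finset.range (mlen x),
          ((Tfun x (l + 1) - Tfun x l) • indic (roundB x (Tfun x l))) a =
            (Tfun x (l + 1) - Tfun x l) * roundX x (Tfun x l) a := by
        intro l hl
        rw [Finset.mem_range] at hl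
        rw [Pi.smul_apply, smul_eq_mul,
          indic_roundB hx2 hx2' (Tfun x l)]
      rw [Finset.sum_congr rfl hterm]
      exact sum_w_roundX a
    rw [← hxeq]
    exact hcm


end PositroidPaper
end
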